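/- Directional density of the convex subdifferential: Let X be a Banach space, f : X → (-∞,+∞] convex lower semicontinuous, x̄ ∈ dom f and u ∈ X with x̄ + u ∈ dom f. Then there exists a sequence ((x_n, x_n*)) in the graph of ∂_MR f such that x_n →_u x̄ (i.e. x_n = x̄ + t_n v_n with t_n ↘ 0, v_n → u), f(x_n) → f(x̄), and limsup_n ⟨x_n*, x_n − x̄⟩ ≤ 0. -/

import Mathlib

open Filter Topology

/-- Lower radial subderivative `f^r(x;u)`. -/
noncomputable def radial {X : Type*} [NormedAddCommGroup X] [NormedSpace ℝ X]
    (f : X → EReal) (x u : X) : EReal :=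
  Filter.liminf (fun t : ℝ => ((t⁻¹ : ℝ) : EReal) * (f (x + t • u) - f x)) (𝓝[>] (0:ℝ))

/-- Upper radial subderivative `f^r_+(x;u)`. -/
noncomputable def radialPlus {X : Type*} [NormedAddCommGroup X] [NormedSpace ℝ X]
    (f : X → EReal) (x u : X) : EReal :=
  Filter.limsup (fun t : ℝ => ((t⁻¹ : ℝ) : EReal) * (f (x + t • u) - f x)) (𝓝[>] (0:ℝ))

set_option linter.unusedSectionVars false
set_option linter.unusedVariables false
set_option linter.unusedTactic false

section DDauxSection

open Set

variable {X : Type*} [NormedAddCommGroup X] [NormedSpace ℝ X]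

lemma DDaux.epi_isClosed {f : X → EReal} (hf : LowerSemicontinuous f) :
    IsClosed {p : X × ℝ | f p.1 ≤ (p.2 : EReal)} := by
  have h1 : IsClosed {p : X × EReal | f p.1 ≤ p.2} := hf.isClosed_epigraph
  have hc : Continuous fun p : X × ℝ => (p.1, (p.2 : EReal)) :=
    continuous_fst.prodMk (continuous_coe_real_ereal.comp continuous_snd)
  exact h1.preimage hc

lemma DDaux.epi_convex {f : X → EReal}
    (hconv : ∀ x y : X, ∀ t : ℝ, 0 ≤ t → t ≤ 1 →
      f ((1 - t) • x + t • y) ≤ (((1 - t : ℝ)) : EReal) * f x + ((t : ℝ) : EReal) * f y) :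
    Convex ℝ {p : X × ℝ | f p.1 ≤ (p.2 : EReal)} := by
  rintro p hp q hq a b ha hb hab
  simp only [Set.mem_setOf_eq] at hp hq ⊢
  have hb1 : b ≤ 1 := by linarith
  have h := hconv p.1 q.1 b hb hb1
  have hab' : (1 : ℝ) - b = a := by linarith
  rw [hab'] at h
  have h2 : ((a : ℝ) : EReal) * f p.1 + ((b : ℝ) : EReal) * f q.1
      ≤ ((a : ℝ) : EReal) * (p.2 : EReal) + ((b : ℝ) : EReal) * (q.2 : EReal) := by
    exact add_le_add (mul_le_mul_of_nonneg_left hp (EReal.coe_nonneg.2 ha))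
      (mul_le_mul_of_nonneg_left hq (EReal.coe_nonneg.2 hb))
  have h3 : ((a : ℝ) : EReal) * (p.2 : EReal) + ((b : ℝ) : EReal) * (q.2 : EReal)
      = ((a * p.2 + b * q.2 : ℝ) : EReal) := by
    rw [← EReal.coe_mul, ← EReal.coe_mul, ← EReal.coe_add]
  calc f (a • p + b • q).1 = f (a • p.1 + b • q.1) := rfl
    _ ≤ _ := h
    _ ≤ _ := h2
    _ = ((a * p.2 + b * q.2 : ℝ) : EReal) := h3
    _ = (((a • p + b • q).2 : ℝ) : EReal) := rfl

lemma DDaux.lsc_add_cont {f : X → EReal} (hf : LowerSemicontinuous f) (hbot : ∀ y, f y ≠ ⊥)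
    {w : X → ℝ} (hw : Continuous w) :
    LowerSemicontinuous fun y => f y + ((w y : ℝ) : EReal) := by
  intro x c hc
  induction c with
  | bot =>
    filter_upwards with y
    simp only [bot_lt_iff_ne_bot]
    intro hcon
    rcases EReal.add_eq_bot_iff.1 hcon with h | h
    · exact hbot y h
    · exact EReal.coe_ne_bot _ h
  | coe c =>
    have hx : ∃ a : ℝ, ((a : ℝ) : EReal) < f x ∧ c < a + w x := by
      rcases eq_or_ne (f x) ⊤ with h | h
      · exact ⟨c - w x + 1, by rw [h]; exact EReal.coe_lt_top _, by linarith⟩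
      · have hxr : f x = ((f x).toReal : EReal) := (EReal.coe_toReal h (hbot x)).symm
        have hlt : c - w x < (f x).toReal := by
          by_contra hcon
          push_neg at hcon
          have : f x + ((w x : ℝ) : EReal) ≤ ((c : ℝ) : EReal) := by
            rw [hxr, ← EReal.coe_add]
            exact EReal.coe_le_coe_iff.2 (by linarith)
          exact absurd hc (not_lt.2 this)
        refine ⟨(c - w x + (f x).toReal) / 2, ?_, by linarith⟩
        exact lt_of_lt_of_eq (EReal.coe_lt_coe_iff.2
          (by linarith : (c - w x + (f x).toReal) / 2 < (f x).toReal))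
          (EReal.coe_toReal h (hbot x))
    obtain ⟨a, ha1, ha2⟩ := hx
    have h1 := hf x _ ha1
    have h2 : ∀ᶠ y in 𝓝 x, c - a < w y :=
      (hw.continuousAt (x := x)).eventually_const_lt (by linarith)
    filter_upwards [h1, h2] with y hy1 hy2
    have : ((c : ℝ) : EReal) = ((c - a : ℝ) : EReal) + ((a : ℝ) : EReal) := by
      rw [← EReal.coe_add]; norm_num
    rw [this]
    calc ((c - a : ℝ) : EReal) + ((a : ℝ) : EReal) < ((w y : ℝ) : EReal) + f y :=
          EReal.add_lt_add (EReal.coe_lt_coe_iff.2 hy2) hy1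
      _ = f y + ((w y : ℝ) : EReal) := add_comm _ _
  | top => exact absurd hc (not_lt.2 le_top)

lemma DDaux.exists_eps_subgradient {f : X → EReal} (hf : LowerSemicontinuous f)
    (hbot : ∀ y, f y ≠ ⊥)
    (hconv : ∀ x y : X, ∀ t : ℝ, 0 ≤ t → t ≤ 1 →
      f ((1 - t) • x + t • y) ≤ (((1 - t : ℝ)) : EReal) * f x + ((t : ℝ) : EReal) * f y)
    (z : X) (hz : f z ≠ ⊤) {ε : ℝ} (hε : 0 < ε) :
    ∃ zs : X →L[ℝ] ℝ, ∀ y, ((zs (y - z) : ℝ) : EReal) + f z ≤ f y + (ε : EReal) := by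
  set E := {p : X × ℝ | f p.1 ≤ (p.2 : EReal)} with hE
  set c : ℝ := (f z).toReal with hc
  have hfz : f z = (c : EReal) := (EReal.coe_toReal hz (hbot z)).symm
  have hpt : ((z, c - ε) : X × ℝ) ∉ E := by
    simp only [hE, Set.mem_setOf_eq, hfz]
    exact fun hcon => absurd (EReal.coe_le_coe_iff.1 hcon) (by linarith)
  obtain ⟨Φ, s₀, hs1, hs2⟩ := geometric_hahn_banach_closed_point
    (DDaux.epi_convex hconv) (DDaux.epi_isClosed hf) hpt
  set ψ : X →L[ℝ] ℝ := Φ.comp (ContinuousLinearMap.inl ℝ X ℝ) with hψ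
  set α : ℝ := Φ (0, 1) with hα
  have hΦ : ∀ (y : X) (r : ℝ), Φ (y, r) = ψ y + r * α := by
    intro y r
    have hyr : ((y, r) : X × ℝ) = (y, 0) + r • ((0 : X), (1 : ℝ)) := by
      simp [Prod.ext_iff]
    rw [hyr, map_add, map_smul, smul_eq_mul]
    rfl
  have hzc : ((z, c) : X × ℝ) ∈ E := by
    simp only [hE, Set.mem_setOf_eq, hfz]; exact le_refl _
  have hαneg : α < 0 := by
    have hle : α ≤ 0 := by
      by_contra hpos
      push_neg at hpos
      obtain ⟨n, hn⟩ := exists_nat_gt ((s₀ - ψ z - c * α) / α)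
      have hmem : ((z, c + n) : X × ℝ) ∈ E := by
        simp only [hE, Set.mem_setOf_eq, hfz]
        exact EReal.coe_le_coe_iff.2 (le_add_of_nonneg_right (Nat.cast_nonneg n))
      have h1 := hs1 _ hmem
      rw [hΦ] at h1
      have h2 := (div_lt_iff₀ hpos).1 hn
      nlinarith
    rcases lt_or_eq_of_le hle with h | h
    · exact h
    · exfalso
      have h1 := hs1 _ hzc
      have h2 := hs2
      rw [hΦ] at h1 h2
      rw [h] at h1 h2
      linarith
  set β : ℝ := -α with hβdef
  have hβ : 0 < β := by simp [hβdef]; linarith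
  refine ⟨β⁻¹ • ψ, fun y => ?_⟩
  rcases eq_or_ne (f y) ⊤ with h | h
  · rw [h]
    rw [EReal.top_add_coe]
    exact le_top
  · set ry := (f y).toReal with hry
    have hfy : f y = (ry : EReal) := (EReal.coe_toReal h (hbot y)).symm
    have hmem : ((y, ry) : X × ℝ) ∈ E := by
      simp only [hE, Set.mem_setOf_eq, hfy]; exact le_refl _
    have h1 := hs1 _ hmem
    have h2 := hs2
    rw [hΦ] at h1 h2
    rw [hfz, hfy, ← EReal.coe_add, ← EReal.coe_add]
    apply EReal.coe_le_coe_iff.2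
    have happ : (β⁻¹ • ψ) (y - z) = β⁻¹ * (ψ y - ψ z) := by
      simp [map_sub, mul_sub]
    rw [happ]
    have key : ψ y - ψ z ≤ (ry + ε - c) * β := by rw [hβdef]; nlinarith
    have h3 : β⁻¹ * (ψ y - ψ z) ≤ β⁻¹ * ((ry + ε - c) * β) :=
      mul_le_mul_of_nonneg_left key (le_of_lt (inv_pos.2 hβ))
    have h4 : β⁻¹ * ((ry + ε - c) * β) = ry + ε - c := by field_simp
    linarith


lemma DDaux.exists_between_coe {A : ℝ} {b : EReal} (h : (A : EReal) < b) :
    ∃ c : ℝ, A < c ∧ (c : EReal) < b := by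
  rcases eq_or_ne b ⊤ with rfl | hb
  · exact ⟨A + 1, by linarith, EReal.coe_lt_top _⟩
  · have hbbot : b ≠ ⊥ := fun hc => by simp [hc] at h
    have hbr : b = (b.toReal : EReal) := (EReal.coe_toReal hb hbbot).symm
    rw [hbr] at h
    have hA : A < b.toReal := EReal.coe_lt_coe_iff.1 h
    exact ⟨(A + b.toReal) / 2, by linarith,
      lt_of_lt_of_eq (EReal.coe_lt_coe_iff.2
        (by linarith : (A + b.toReal) / 2 < b.toReal)) (EReal.coe_toReal hb hbbot)⟩

lemma DDaux.ekeland [CompleteSpace X] {g : X → EReal} (hg : LowerSemicontinuous g)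
    (hgbot : ∀ y, g y ≠ ⊥) (z : X) (hz : g z ≠ ⊤)
    {ε κ : ℝ} (hε : 0 < ε) (hκ : 0 < κ)
    (hmin : ∀ y, g z ≤ g y + (ε : EReal)) :
    ∃ x, g x ≤ g z ∧ κ * ‖x - z‖ ≤ ε ∧
      ∀ y, g x ≤ g y + ((κ * ‖y - x‖ : ℝ) : EReal) := by
  set ρ : ℝ := (g z).toReal with hρ
  have hgz : g z = (ρ : EReal) := (EReal.coe_toReal hz (hgbot z)).symm
  have hlb : ∀ y, g y ≠ ⊤ → ρ - ε ≤ (g y).toReal := by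
    intro y hy
    have h1 := hmin y
    have hgy : g y = ((g y).toReal : EReal) := (EReal.coe_toReal hy (hgbot y)).symm
    rw [hgz, hgy, ← EReal.coe_add] at h1
    have := EReal.coe_le_coe_iff.1 h1
    linarith
  set S : X → Set X :=
    fun x => {y | g y ≠ ⊤ ∧ (g y).toReal + κ * ‖y - x‖ ≤ (g x).toReal} with hS
  have hxS : ∀ x, g x ≠ ⊤ → x ∈ S x := by
    intro x hx
    simp only [hS, Set.mem_setOf_eq, sub_self, norm_zero, mul_zero, add_zero]
    exact ⟨hx, le_refl _⟩
  have htrans : ∀ x y, y ∈ S x → S y ⊆ S x := by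
    intro x y hy w hw
    simp only [hS, Set.mem_setOf_eq] at hy hw ⊢
    refine ⟨hw.1, ?_⟩
    have htri : ‖w - x‖ ≤ ‖w - y‖ + ‖y - x‖ := by
      simpa using norm_sub_le_norm_sub_add_norm_sub w y x
    have := mul_le_mul_of_nonneg_left htri (le_of_lt hκ)
    rw [mul_add] at this
    linarith [hy.2, hw.2]
  have hbdd : ∀ x, BddBelow ((fun y => (g y).toReal) '' S x) := by
    intro x
    refine ⟨ρ - ε, ?_⟩
    rintro - ⟨y, hy, rfl⟩
    exact hlb y hy.1
  set m : X → ℝ := fun x => sInf ((fun y => (g y).toReal) '' S x) with hm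
  have hmle : ∀ x, g x ≠ ⊤ → m x ≤ (g x).toReal := fun x hx =>
    csInf_le (hbdd x) ⟨x, hxS x hx, rfl⟩
  have hmle' : ∀ x y, y ∈ S x → m x ≤ (g y).toReal := fun x y hy =>
    csInf_le (hbdd x) ⟨y, hy, rfl⟩
  have hstep : ∀ x : X, ∃ y : X, g x ≠ ⊤ →
      y ∈ S x ∧ (g y).toReal ≤ (m x + (g x).toReal) / 2 := by
    intro x
    by_cases hx : g x ≠ ⊤
    · by_cases hlt : m x < (g x).toReal
      · have h2 : m x < (m x + (g x).toReal) / 2 := by linarith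
        obtain ⟨-, ⟨y, hy, rfl⟩, hylt⟩ :=
          (csInf_lt_iff (hbdd x) ⟨(g x).toReal, ⟨x, hxS x hx, rfl⟩⟩).1 h2
        exact ⟨y, fun _ => ⟨hy, le_of_lt hylt⟩⟩
      · push_neg at hlt
        refine ⟨x, fun _ => ⟨hxS x hx, by linarith [hmle x hx]⟩⟩
    · exact ⟨x, fun h => absurd h hx⟩
  choose F hF using hstep
  set x_ : ℕ → X := fun k => F^[k] z with hx_
  have hx0 : x_ 0 = z := rfl
  have hsucc : ∀ k, x_ (k + 1) = F (x_ k) := by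
    intro k
    simp only [hx_, Function.iterate_succ_apply']
  have htop : ∀ k, g (x_ k) ≠ ⊤ := by
    intro k
    induction k with
    | zero => exact hz
    | succ k ih =>
      rw [hsucc k]
      exact ((hF (x_ k) ih).1).1
  have hmem : ∀ k, x_ (k + 1) ∈ S (x_ k) := by
    intro k
    rw [hsucc k]
    exact (hF (x_ k) (htop k)).1
  set r : ℕ → ℝ := fun k => (g (x_ k)).toReal with hr
  have hhalf : ∀ k, r (k + 1) ≤ (m (x_ k) + r k) / 2 := by
    intro k
    have := (hF (x_ k) (htop k)).2
    rw [← hsucc k] at this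
    exact this
  have hchain : ∀ k l, k ≤ l → x_ l ∈ S (x_ k) := by
    intro k l hkl
    induction l with
    | zero =>
      have : k = 0 := Nat.le_zero.1 hkl
      subst this
      exact hxS _ (htop 0)
    | succ l ih =>
      rcases Nat.lt_or_ge k (l + 1) with h | h
      · exact htrans _ _ (ih (Nat.lt_succ_iff.1 h)) (hmem l)
      · have : k = l + 1 := le_antisymm hkl h
        subst this
        exact hxS _ (htop _)
  have hrmono : ∀ k l, k ≤ l → r l + κ * ‖x_ l - x_ k‖ ≤ r k :=
    fun k l h => (hchain k l h).2
  have hranti : ∀ k l, k ≤ l → r l ≤ r k := by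
    intro k l h
    have h1 := hrmono k l h
    have h2 : 0 ≤ κ * ‖x_ l - x_ k‖ := by positivity
    linarith
  have hlbr : ∀ k, ρ - ε ≤ r k := fun k => hlb _ (htop k)
  have hbddr : BddBelow (Set.range r) := ⟨ρ - ε, by rintro - ⟨k, rfl⟩; exact hlbr k⟩
  set L : ℝ := ⨅ k, r k with hL
  have hrconv : Tendsto r atTop (𝓝 L) :=
    tendsto_atTop_ciInf (fun k l h => hranti k l h) hbddr
  have hLler : ∀ k, L ≤ r k := fun k => ciInf_le hbddr k
  have hcauchy : CauchySeq x_ := by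
    apply cauchySeq_of_le_tendsto_0 (fun N => (r N - L) / κ)
    · intro a b N ha hb
      rcases le_total a b with h | h
      · have h1 := hrmono a b h
        have h2 : dist (x_ a) (x_ b) = ‖x_ b - x_ a‖ := by
          rw [dist_eq_norm, norm_sub_rev]
        rw [h2, le_div_iff₀ hκ]
        have := hranti N a ha
        have := hLler b
        nlinarith
      · have h1 := hrmono b a h
        have h2 : dist (x_ a) (x_ b) = ‖x_ a - x_ b‖ := by rw [dist_eq_norm]
        rw [h2, le_div_iff₀ hκ]
        have := hranti N b hb
        have := hLler a
        nlinarith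
    · have : Tendsto (fun N => (r N - L) / κ) atTop (𝓝 ((L - L) / κ)) :=
        ((hrconv.sub_const L).div_const κ)
      simpa using this
  obtain ⟨xh, hxh⟩ := cauchySeq_tendsto_of_complete hcauchy
  have hup : ∀ k, g xh ≤ ((r k - κ * ‖xh - x_ k‖ : ℝ) : EReal) := by
    intro k
    by_contra hcon
    push_neg at hcon
    obtain ⟨c, hc1, hc2⟩ := DDaux.exists_between_coe hcon
    have hev : ∀ᶠ l in atTop, ((c : ℝ) : EReal) < g (x_ l) :=
      hxh.eventually (hg xh _ hc2)
    have hev2 : ∀ᶠ l in atTop, c ≤ r k - κ * ‖x_ l - x_ k‖ := by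
      filter_upwards [hev, eventually_ge_atTop k] with l h1 h2
      have hgl : g (x_ l) = ((r l : ℝ) : EReal) :=
        (EReal.coe_toReal (htop l) (hgbot _)).symm
      rw [hgl] at h1
      have := EReal.coe_lt_coe_iff.1 h1
      have := hrmono k l h2
      linarith
    have htt : Tendsto (fun l => r k - κ * ‖x_ l - x_ k‖) atTop
        (𝓝 (r k - κ * ‖xh - x_ k‖)) := by
      apply Tendsto.const_sub
      exact (Tendsto.norm (hxh.sub_const (x_ k))).const_mul κ
    have := ge_of_tendsto htt hev2
    linarith
  have hxhtop : g xh ≠ ⊤ := by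
    intro hcon
    have := hup 0
    rw [hcon] at this
    exact (EReal.coe_ne_top _) (top_le_iff.1 this)
  set rh : ℝ := (g xh).toReal with hrh
  have hgxh : g xh = (rh : EReal) := (EReal.coe_toReal hxhtop (hgbot xh)).symm
  have hups : ∀ k, rh + κ * ‖xh - x_ k‖ ≤ r k := by
    intro k
    have := hup k
    rw [hgxh] at this
    have := EReal.coe_le_coe_iff.1 this
    linarith
  have hrhL : rh ≤ L := by
    apply ge_of_tendsto hrconv
    filter_upwards with k
    have h2 : (0:ℝ) ≤ κ * ‖xh - x_ k‖ := by positivity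
    linarith [hups k]
  have hr0 : r 0 = ρ := by
    show (g (x_ 0)).toReal = ρ
    rw [hx0]
  refine ⟨xh, ?_, ?_, ?_⟩
  · rw [hgxh, hgz]
    apply EReal.coe_le_coe_iff.2
    have := hups 0
    rw [hx0, hr0] at this
    have h2 : (0:ℝ) ≤ κ * ‖xh - z‖ := by positivity
    linarith
  · have h1 := hups 0
    rw [hx0, hr0] at h1
    have h2 := hmin xh
    rw [hgz, hgxh, ← EReal.coe_add] at h2
    have h3 := EReal.coe_le_coe_iff.1 h2
    linarith
  · intro y
    by_contra hcon
    push_neg at hcon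
    have hytop : g y ≠ ⊤ := by
      intro h
      rw [h, EReal.top_add_coe] at hcon
      exact absurd hcon not_top_lt
    set ry : ℝ := (g y).toReal with hry
    have hgy : g y = (ry : EReal) := (EReal.coe_toReal hytop (hgbot y)).symm
    rw [hgy, hgxh, ← EReal.coe_add] at hcon
    have hreal : ry + κ * ‖y - xh‖ < rh := EReal.coe_lt_coe_iff.1 hcon
    have hyS : ∀ k, y ∈ S (x_ k) := by
      intro k
      refine ⟨hytop, ?_⟩
      have htri : ‖y - x_ k‖ ≤ ‖y - xh‖ + ‖xh - x_ k‖ := by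
        simpa using norm_sub_le_norm_sub_add_norm_sub y xh (x_ k)
      have hm2 := mul_le_mul_of_nonneg_left htri (le_of_lt hκ)
      rw [mul_add] at hm2
      have := hups k
      linarith
    have hmy : ∀ k, m (x_ k) ≤ ry := fun k => hmle' _ _ (hyS k)
    have hrky : ∀ k, r (k + 1) ≤ (ry + r k) / 2 := by
      intro k
      have := hhalf k
      have := hmy k
      linarith
    have hLy : L ≤ (ry + L) / 2 := by
      have ht1 : Tendsto (fun k => r (k + 1)) atTop (𝓝 L) :=
        hrconv.comp (tendsto_add_atTop_nat 1)
      have ht2 : Tendsto (fun k => (ry + r k) / 2) atTop (𝓝 ((ry + L) / 2)) :=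
        ((tendsto_const_nhds.add hrconv).div_const 2)
      exact le_of_tendsto_of_tendsto' ht1 ht2 hrky
    have hk : (0:ℝ) ≤ κ * ‖y - xh‖ := by positivity
    linarith

lemma DDaux.sum_rule {f : X → EReal} (hf : LowerSemicontinuous f) (hbot : ∀ y, f y ≠ ⊥)
    (hconv : ∀ x y : X, ∀ t : ℝ, 0 ≤ t → t ≤ 1 →
      f ((1 - t) • x + t • y) ≤ (((1 - t : ℝ)) : EReal) * f x + ((t : ℝ) : EReal) * f y)
    (x : X) (hx : f x ≠ ⊤) (zs : X →L[ℝ] ℝ) {κ : ℝ} (hκ : 0 < κ)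
    (hmin : ∀ y, f x ≤ f y + ((κ * ‖y - x‖ - zs (y - x) : ℝ) : EReal)) :
    ∃ xs : X →L[ℝ] ℝ, (∀ y, ((xs (y - x) : ℝ) : EReal) + f x ≤ f y) ∧
      ∀ w : X, zs w - xs w ≤ κ * ‖w‖ := by
  set c : ℝ := (f x).toReal with hc
  have hfx : f x = (c : EReal) := (EReal.coe_toReal hx (hbot x)).symm
  set q : X → ℝ := fun y => c + zs (y - x) - κ * ‖y - x‖ with hq
  have hqx : q x = c := by simp [hq]
  have hqcont : Continuous q := by
    apply Continuous.sub
    · exact continuous_const.add (zs.continuous.comp (continuous_id.sub continuous_const))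
    · exact continuous_const.mul ((continuous_id.sub continuous_const).norm)
  have hqle : ∀ y, ((q y : ℝ) : EReal) ≤ f y := by
    intro y
    rcases eq_or_ne (f y) ⊤ with h | h
    · rw [h]; exact le_top
    · have hfy : f y = ((f y).toReal : EReal) := (EReal.coe_toReal h (hbot y)).symm
      have h1 := hmin y
      rw [hfx, hfy, ← EReal.coe_add] at h1
      have := EReal.coe_le_coe_iff.1 h1
      rw [hfy]
      exact EReal.coe_le_coe_iff.2 (by simp only [hq]; linarith)
  set O : Set (X × ℝ) := {p | p.2 < q p.1} with hO
  set E : Set (X × ℝ) := {p | f p.1 ≤ (p.2 : EReal)} with hE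
  have hOopen : IsOpen O := isOpen_lt continuous_snd (hqcont.comp continuous_fst)
  have hOconv : Convex ℝ O := by
    rintro p hp p' hp' a b ha hb hab
    simp only [hO, Set.mem_setOf_eq] at hp hp' ⊢
    have hx' : (x : X) = a • x + b • x := by rw [← add_smul, hab, one_smul]
    have h1 : a • (p.1 - x) + b • (p'.1 - x) = a • p.1 + b • p'.1 - x := by
      rw [smul_sub, smul_sub, sub_add_sub_comm, ← add_smul, hab, one_smul]
    have h2 : ‖a • (p.1 - x) + b • (p'.1 - x)‖ ≤ a * ‖p.1 - x‖ + b * ‖p'.1 - x‖ := by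
      calc ‖a • (p.1 - x) + b • (p'.1 - x)‖ ≤ ‖a • (p.1 - x)‖ + ‖b • (p'.1 - x)‖ :=
            norm_add_le _ _
        _ = a * ‖p.1 - x‖ + b * ‖p'.1 - x‖ := by
            rw [norm_smul, norm_smul, Real.norm_eq_abs, Real.norm_eq_abs,
              abs_of_nonneg ha, abs_of_nonneg hb]
    have h3 := mul_le_mul_of_nonneg_left h2 (le_of_lt hκ)
    have hac : a * c + b * c = c := by rw [← add_mul, hab, one_mul]
    have hcomb : a * q p.1 + b * q p'.1 ≤ q (a • p.1 + b • p'.1) := by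
      simp only [hq]
      rw [← h1, map_add, map_smul, map_smul]
      simp only [smul_eq_mul]
      linarith [h3, hac]
    have hfst : (a • p + b • p').1 = a • p.1 + b • p'.1 := rfl
    have hsnd : (a • p + b • p').2 = a * p.2 + b * p'.2 := rfl
    rw [hfst, hsnd]
    rcases eq_or_lt_of_le ha with ha' | ha'
    · have hb1 : b = 1 := by linarith
      have := mul_lt_mul_of_pos_left hp' (by linarith : (0:ℝ) < b)
      have h0 : a * p.2 = a * q p.1 := by rw [← ha', zero_mul, zero_mul]
      calc a * p.2 + b * p'.2 < a * q p.1 + b * q p'.1 := by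
            rw [h0]; exact add_lt_add_right (mul_lt_mul_of_pos_left hp' (by linarith)) _
        _ ≤ _ := hcomb
    · calc a * p.2 + b * p'.2 < a * q p.1 + b * q p'.1 :=
            add_lt_add_of_lt_of_le (mul_lt_mul_of_pos_left hp ha')
              (mul_le_mul_of_nonneg_left (le_of_lt hp') hb)
        _ ≤ _ := hcomb
  have hdisj : Disjoint O E := by
    rw [Set.disjoint_left]
    rintro ⟨y, r⟩ hpO hpE
    simp only [hO, Set.mem_setOf_eq] at hpO
    simp only [hE, Set.mem_setOf_eq] at hpE
    have h1 : ((r : ℝ) : EReal) < f y :=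
      lt_of_lt_of_le (EReal.coe_lt_coe_iff.2 hpO) (hqle y)
    exact absurd hpE (not_le.2 h1)
  obtain ⟨Φ, s₀, hs1, hs2⟩ :=
    geometric_hahn_banach_open hOconv hOopen (DDaux.epi_convex hconv) hdisj
  set ψ : X →L[ℝ] ℝ := Φ.comp (ContinuousLinearMap.inl ℝ X ℝ) with hψ
  set α : ℝ := Φ (0, 1) with hα
  have hΦ : ∀ (y : X) (r : ℝ), Φ (y, r) = ψ y + r * α := by
    intro y r
    have hyr : ((y, r) : X × ℝ) = (y, 0) + r • ((0 : X), (1 : ℝ)) := by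
      simp [Prod.ext_iff]
    rw [hyr, map_add, map_smul, smul_eq_mul]
    rfl
  have hq_lt : ∀ (y : X) (r : ℝ), r < q y → ψ y + r * α < s₀ := by
    intro y r h
    have := hs1 (y, r) h
    rwa [hΦ] at this
  have hE_ge : ∀ (y : X) (r : ℝ), f y ≤ (r : EReal) → s₀ ≤ ψ y + r * α := by
    intro y r h
    have := hs2 (y, r) h
    rwa [hΦ] at this
  have hxcE : f x ≤ ((c : ℝ) : EReal) := le_of_eq hfx
  have hαpos : 0 < α := by
    have hle : 0 ≤ α := by
      by_contra hneg
      push_neg at hneg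
      obtain ⟨n, hn⟩ := exists_nat_gt ((s₀ - ψ x - c * α) / (-α))
      have h1 := hq_lt x (c - (n + 1)) (by rw [hqx]; push_cast; linarith)
      have h2 : (s₀ - ψ x - c * α) < (n : ℝ) * (-α) := (div_lt_iff₀ (by linarith)).1 hn
      nlinarith
    rcases lt_or_eq_of_le hle with h | h
    · exact h
    · exfalso
      have h1 := hq_lt x (c - 1) (by rw [hqx]; linarith)
      have h2 := hE_ge x c hxcE
      rw [← h] at h1 h2
      linarith
  set xs : X →L[ℝ] ℝ := (-(α⁻¹)) • ψ with hxsdef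
  have hα0 : α ≠ 0 := ne_of_gt hαpos
  have hxs : ∀ w, α * xs w = -ψ w := by
    intro w
    simp only [hxsdef, ContinuousLinearMap.smul_apply, smul_eq_mul]
    have hone : α * -α⁻¹ = -1 := by field_simp
    rw [← mul_assoc, hone, neg_one_mul]
  have hqs : ∀ y, ψ y + q y * α ≤ s₀ := by
    intro y
    clear_value xs α ψ E O q c
    by_contra hcon
    push_neg at hcon
    obtain ⟨δ, hδdef⟩ : ∃ δ : ℝ, δ = (ψ y + q y * α - s₀) / (2 * α) := ⟨_, rfl⟩
    have hδ : 0 < δ := by rw [hδdef]; exact div_pos (by linarith) (by linarith)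
    have h1 := hq_lt y (q y - δ) (by linarith)
    have hexpand : (q y - δ) * α = q y * α - δ * α := by ring
    rw [hexpand] at h1
    have hδα : δ * α = (ψ y + q y * α - s₀) / 2 := by
      rw [hδdef]; field_simp
    linarith [h1, hδα, hcon]
  have hkey : s₀ = ψ x + c * α := by
    have h1 := hqs x
    rw [hqx] at h1
    have h2 := hE_ge x c hxcE
    linarith
  refine ⟨xs, ?_, ?_⟩
  · intro y
    rcases eq_or_ne (f y) ⊤ with h | h
    · rw [h]; exact le_top
    · set ry : ℝ := (f y).toReal with hry
      have hfy : f y = (ry : EReal) := (EReal.coe_toReal h (hbot y)).symm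
      have h1 := hE_ge y ry (le_of_eq hfy)
      rw [hfy, hfx, ← EReal.coe_add]
      apply EReal.coe_le_coe_iff.2
      have hxsv : α * xs (y - x) = ψ x - ψ y := by
        rw [hxs (y - x), map_sub]; ring
      have h2 : α * (xs (y - x) + c - ry) ≤ α * 0 := by
        rw [mul_zero]
        have hexp : α * (xs (y - x) + c - ry) = α * xs (y - x) + α * c - α * ry := by ring
        rw [hexp, hxsv]
        linarith [h1, hkey]
      have h3 := le_of_mul_le_mul_left h2 hαpos
      linarith
  · intro w
    have h1 := hqs (x + w)
    have hq2 : q (x + w) = c + zs w - κ * ‖w‖ := by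
      simp only [hq, add_sub_cancel_left]
    have hψadd : ψ (x + w) = ψ x + ψ w := map_add _ _ _
    rw [hq2, hψadd, hkey] at h1
    have hxsw := hxs w
    by_contra hcon
    push_neg at hcon
    have h2 : α * (zs w - κ * ‖w‖ - xs w) ≤ α * 0 := by
      rw [mul_zero]
      have hexp : α * (zs w - κ * ‖w‖ - xs w)
          = zs w * α - κ * ‖w‖ * α + ψ w := by
        linear_combination (-1 : ℝ) * hxs w
      rw [hexp]
      linarith [h1]
    have h3 := le_of_mul_le_mul_left h2 hαpos
    linarith

lemma DDaux.key [CompleteSpace X] {f : X → EReal} (hf : LowerSemicontinuous f)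
    (hbot : ∀ y, f y ≠ ⊥)
    (hconv : ∀ x y : X, ∀ t : ℝ, 0 ≤ t → t ≤ 1 →
      f ((1 - t) • x + t • y) ≤ (((1 - t : ℝ)) : EReal) * f x + ((t : ℝ) : EReal) * f y)
    (z : X) (hz : f z ≠ ⊤) {ε μ : ℝ} (hε : 0 < ε) (hμ : 0 < μ) :
    ∃ (x : X) (xs : X →L[ℝ] ℝ),
      (∀ y, ((xs (y - x) : ℝ) : EReal) + f x ≤ f y) ∧
      ‖x - z‖ ≤ μ ∧ f x ≤ f z + (ε : EReal) ∧ xs (x - z) ≤ 2 * ε := by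
  obtain ⟨zs, hzs⟩ := DDaux.exists_eps_subgradient hf hbot hconv z hz hε
  obtain ⟨lam, hlam⟩ : ∃ lam : ℝ, lam = min μ (ε / (1 + ‖zs‖)) := ⟨_, rfl⟩
  have hzsnorm : (0 : ℝ) ≤ ‖zs‖ := norm_nonneg _
  have hlampos : 0 < lam := by
    rw [hlam]; exact lt_min hμ (div_pos hε (by linarith))
  have hlamμ : lam ≤ μ := by rw [hlam]; exact min_le_left _ _
  have hlamzs : ‖zs‖ * lam ≤ ε := by
    have h1 : lam ≤ ε / (1 + ‖zs‖) := by rw [hlam]; exact min_le_right _ _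
    have h2 : lam * (1 + ‖zs‖) ≤ ε := by
      rw [← le_div_iff₀ (by linarith : (0:ℝ) < 1 + ‖zs‖)]; exact h1
    nlinarith
  obtain ⟨κ, hκdef⟩ : ∃ κ : ℝ, κ = ε / lam := ⟨_, rfl⟩
  have hκpos : 0 < κ := by rw [hκdef]; exact div_pos hε hlampos
  have hglsc : LowerSemicontinuous fun y => f y + ((-(zs y) : ℝ) : EReal) :=
    DDaux.lsc_add_cont hf hbot (zs.continuous.neg)
  have hgbot : ∀ y, (fun y => f y + ((-(zs y) : ℝ) : EReal)) y ≠ ⊥ := by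
    intro y h
    rcases EReal.add_eq_bot_iff.1 h with h' | h'
    · exact hbot y h'
    · exact EReal.coe_ne_bot _ h'
  have hfz : f z = ((f z).toReal : EReal) := (EReal.coe_toReal hz (hbot z)).symm
  have hgz : (fun y => f y + ((-(zs y) : ℝ) : EReal)) z ≠ ⊤ := by
    simp only
    rw [hfz, ← EReal.coe_add]
    exact EReal.coe_ne_top _
  have hgmin : ∀ y, (fun y => f y + ((-(zs y) : ℝ) : EReal)) z ≤
      (fun y => f y + ((-(zs y) : ℝ) : EReal)) y + (ε : EReal) := by
    intro y
    simp only
    rcases eq_or_ne (f y) ⊤ with h | h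
    · rw [h, EReal.top_add_coe, EReal.top_add_coe]
      exact le_top
    · have hfy : f y = ((f y).toReal : EReal) := (EReal.coe_toReal h (hbot y)).symm
      have h1 := hzs y
      rw [hfz, hfy, ← EReal.coe_add, ← EReal.coe_add] at h1
      have h2 := EReal.coe_le_coe_iff.1 h1
      rw [map_sub] at h2
      rw [hfz, hfy, ← EReal.coe_add, ← EReal.coe_add, ← EReal.coe_add]
      exact EReal.coe_le_coe_iff.2 (by linarith)
  obtain ⟨x, hx1, hx2, hx3⟩ := DDaux.ekeland hglsc hgbot z hgz hε hκpos hgmin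
  have hxz : ‖x - z‖ ≤ lam := by
    rw [hκdef, div_mul_eq_mul_div, div_le_iff₀ hlampos] at hx2
    exact le_of_mul_le_mul_left (by linarith) hε
  have hxtop : f x ≠ ⊤ := by
    intro h
    rw [h, EReal.top_add_coe] at hx1
    rw [hfz, ← EReal.coe_add] at hx1
    exact (EReal.coe_ne_top _) (top_le_iff.1 hx1)
  have hfxr : f x = ((f x).toReal : EReal) := (EReal.coe_toReal hxtop (hbot x)).symm
  have hx1r : (f x).toReal + -(zs x) ≤ (f z).toReal + -(zs z) := by
    have := hx1
    rw [hfz, hfxr, ← EReal.coe_add, ← EReal.coe_add] at this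
    exact EReal.coe_le_coe_iff.1 this
  have hzsxz : zs (x - z) ≤ ‖zs‖ * lam := by
    have h1 : zs (x - z) ≤ |zs (x - z)| := le_abs_self _
    have h2 : |zs (x - z)| ≤ ‖zs‖ * ‖x - z‖ := by
      rw [← Real.norm_eq_abs]; exact zs.le_opNorm _
    have h3 : ‖zs‖ * ‖x - z‖ ≤ ‖zs‖ * lam :=
      mul_le_mul_of_nonneg_left hxz hzsnorm
    linarith
  have hmin2 : ∀ y, f x ≤ f y + ((κ * ‖y - x‖ - zs (y - x) : ℝ) : EReal) := by
    intro y
    rcases eq_or_ne (f y) ⊤ with h | h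
    · rw [h, EReal.top_add_coe]; exact le_top
    · have hfy : f y = ((f y).toReal : EReal) := (EReal.coe_toReal h (hbot y)).symm
      have h1 := hx3 y
      rw [hfxr, hfy, ← EReal.coe_add, ← EReal.coe_add, ← EReal.coe_add] at h1
      have h2 := EReal.coe_le_coe_iff.1 h1
      rw [hfxr, hfy, ← EReal.coe_add]
      apply EReal.coe_le_coe_iff.2
      rw [map_sub]
      linarith
  obtain ⟨xs, hxs1, hxs2⟩ := DDaux.sum_rule hf hbot hconv x hxtop zs hκpos hmin2
  refine ⟨x, xs, hxs1, le_trans hxz hlamμ, ?_, ?_⟩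
  · rw [hfz, hfxr, ← EReal.coe_add]
    apply EReal.coe_le_coe_iff.2
    have h2 : zs x - zs z ≤ ‖zs‖ * lam := by
      have := hzsxz; rw [map_sub] at this; linarith
    linarith [hlamzs, hx1r]
  · have h1 := hxs2 (z - x)
    have h2 : κ * ‖z - x‖ ≤ ε := by
      rw [norm_sub_rev]
      rw [hκdef, div_mul_eq_mul_div, div_le_iff₀ hlampos] at hx2 ⊢
      exact hx2
    rw [map_sub, map_sub] at h1
    have h3 : zs (x - z) = zs x - zs z := by rw [map_sub]
    have h4 : xs (x - z) = xs x - xs z := by rw [map_sub]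
    rw [h4]
    linarith [hzsxz, hlamzs, h1, h2, h3]

theorem directional_density_convex_subdifferential' {X : Type*} [NormedAddCommGroup X]
    [NormedSpace ℝ X] [CompleteSpace X]
    (f : X → EReal) (hf : LowerSemicontinuous f) (hbot : ∀ y, f y ≠ ⊥)
    (hconv : ∀ x y : X, ∀ t : ℝ, 0 ≤ t → t ≤ 1 →
      f ((1 - t) • x + t • y) ≤ (((1 - t : ℝ)) : EReal) * f x + ((t : ℝ) : EReal) * f y)
    (xbar : X) (hxbar : f xbar ≠ ⊤) (u : X) (hu : f (xbar + u) ≠ ⊤) :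
    ∃ xn : ℕ → X, ∃ xsn : ℕ → (X →L[ℝ] ℝ),
      (∀ n, ∀ y : X, ((xsn n (y - xn n) : ℝ) : EReal) + f (xn n) ≤ f y) ∧
      (∃ t : ℕ → ℝ, ∃ vn : ℕ → X, (∀ n, 0 < t n) ∧
        Filter.Tendsto t Filter.atTop (𝓝 (0:ℝ)) ∧
        Filter.Tendsto vn Filter.atTop (𝓝 u) ∧
        ∀ n, xn n = xbar + t n • vn n) ∧
      Filter.Tendsto (fun n => f (xn n)) Filter.atTop (𝓝 (f xbar)) ∧
      Filter.limsup (fun n => ((xsn n (xn n - xbar) : ℝ) : EReal)) Filter.atTop ≤ 0 := by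
  obtain ⟨rb, hrb⟩ : ∃ rb : ℝ, f xbar = (rb : EReal) :=
    ⟨(f xbar).toReal, (EReal.coe_toReal hxbar (hbot xbar)).symm⟩
  obtain ⟨S, hS⟩ : ∃ S : ℝ, f (xbar + u) = (S : EReal) :=
    ⟨(f (xbar + u)).toReal, (EReal.coe_toReal hu (hbot _)).symm⟩
  set t : ℕ → ℝ := fun n => 1 / (n + 2 : ℝ) with htdef
  set ep : ℕ → ℝ := fun n => 1 / (n + 1 : ℝ) with hepdef
  have htpos : ∀ n, 0 < t n := by
    intro n; rw [htdef]; positivity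
  have heppos : ∀ n, 0 < ep n := by
    intro n; rw [hepdef]; positivity
  have hthalf : ∀ n, t n ≤ 1 / 2 := by
    intro n
    rw [htdef]
    apply div_le_div_of_nonneg_left one_pos.le (by norm_num)
    · have : (0:ℝ) ≤ (n:ℝ) := Nat.cast_nonneg n
      linarith
  have hepone : ∀ n, ep n ≤ 1 := by
    intro n
    rw [hepdef]
    rw [div_le_one (by positivity)]
    have : (0:ℝ) ≤ (n:ℝ) := Nat.cast_nonneg n
    linarith
  have hept : Tendsto ep atTop (𝓝 (0:ℝ)) := by
    rw [hepdef]
    exact tendsto_one_div_add_atTop_nhds_zero_nat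
  have htt : Tendsto t atTop (𝓝 (0:ℝ)) := by
    apply squeeze_zero (fun n => (htpos n).le) (fun n => ?_) hept
    rw [htdef, hepdef]
    apply one_div_le_one_div_of_le (by positivity)
    linarith
  set z : ℕ → X := fun n => xbar + t n • u with hzdef
  have hzeq : ∀ n, (1 - t n) • xbar + t n • (xbar + u) = z n := by
    intro n
    rw [hzdef]
    rw [smul_add, ← add_assoc, ← add_smul, sub_add_cancel, one_smul]
  have hfz_le : ∀ n, f (z n) ≤ (((1 - t n) * rb + t n * S : ℝ) : EReal) := by
    intro n
    have h := hconv xbar (xbar + u) (t n) (htpos n).le (by linarith [hthalf n])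
    rw [hzeq n, hrb, hS, ← EReal.coe_mul, ← EReal.coe_mul, ← EReal.coe_add] at h
    exact h
  have hfz_ne : ∀ n, f (z n) ≠ ⊤ :=
    fun n => ne_top_of_le_ne_top (EReal.coe_ne_top _) (hfz_le n)
  have hex : ∀ n : ℕ, ∃ (x : X) (xs : X →L[ℝ] ℝ),
      (∀ y, ((xs (y - x) : ℝ) : EReal) + f x ≤ f y) ∧
      ‖x - z n‖ ≤ t n * ep n ∧ f x ≤ f (z n) + (ep n : EReal) ∧
      xs (x - z n) ≤ 2 * ep n := by
    intro n
    exact DDaux.key hf hbot hconv (z n) (hfz_ne n) (heppos n)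
      (mul_pos (htpos n) (heppos n))
  choose x xs h1 h2 h3 h4 using hex
  -- the direction sequence
  set vn : ℕ → X := fun n => u + (t n)⁻¹ • (x n - z n) with hvndef
  have hxn_eq : ∀ n, x n = xbar + t n • vn n := by
    intro n
    rw [hvndef]
    simp only
    rw [smul_add, smul_inv_smul₀ (ne_of_gt (htpos n))]
    rw [hzdef]
    simp only
    abel
  have hvn_dist : ∀ n, ‖vn n - u‖ ≤ ep n := by
    intro n
    rw [hvndef]
    simp only [add_sub_cancel_left]
    rw [norm_smul, Real.norm_eq_abs, abs_of_pos (inv_pos.2 (htpos n))]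
    have h := h2 n
    have := mul_le_mul_of_nonneg_left h (inv_pos.2 (htpos n)).le
    rw [← mul_assoc, inv_mul_cancel₀ (ne_of_gt (htpos n)), one_mul] at this
    exact this
  have hvnt : Tendsto vn atTop (𝓝 u) := by
    rw [tendsto_iff_norm_sub_tendsto_zero]
    exact squeeze_zero (fun n => norm_nonneg _) hvn_dist hept
  have hxnt : Tendsto x atTop (𝓝 xbar) := by
    have h0 : Tendsto (fun n => t n • vn n) atTop (𝓝 ((0:ℝ) • u)) := htt.smul hvnt
    rw [zero_smul] at h0
    have := tendsto_const_nhds (x := xbar) (f := atTop (α := ℕ)) |>.add h0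
    rw [add_zero] at this
    apply this.congr
    intro n
    exact (hxn_eq n).symm
  -- upper bound on f (x n)
  set d : ℕ → ℝ := fun n => (1 - t n) * rb + (t n * S + ep n) with hddef
  have hfd : ∀ n, f (x n) ≤ ((d n : ℝ) : EReal) := by
    intro n
    calc f (x n) ≤ f (z n) + (ep n : EReal) := h3 n
      _ ≤ (((1 - t n) * rb + t n * S : ℝ) : EReal) + (ep n : EReal) :=
          add_le_add_left (hfz_le n) _
      _ = ((d n : ℝ) : EReal) := by
          rw [← EReal.coe_add, hddef]
          norm_cast
          ring
  have hdt : Tendsto d atTop (𝓝 rb) := by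
    rw [hddef]
    have h := ((tendsto_const_nhds (x := (1:ℝ)).sub htt).mul
      (tendsto_const_nhds (x := rb))).add
      ((htt.mul (tendsto_const_nhds (x := S))).add hept)
    simpa using h
  have hxt_ne : ∀ n, f (x n) ≠ ⊤ :=
    fun n => ne_top_of_le_ne_top (EReal.coe_ne_top _) (hfd n)
  have hfx_r : ∀ n, f (x n) = (((f (x n)).toReal : ℝ) : EReal) :=
    fun n => (EReal.coe_toReal (hxt_ne n) (hbot _)).symm
  -- convergence of f (x n)
  have hft : Tendsto (fun n => f (x n)) atTop (𝓝 (f xbar)) := by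
    rw [hrb]
    apply tendsto_order.2
    constructor
    · intro a ha
      exact hxnt.eventually (hf xbar a (by show a < f xbar; rw [hrb]; exact ha))
    · intro b hb
      have hct : Tendsto (fun n => ((d n : ℝ) : EReal)) atTop (𝓝 ((rb : ℝ) : EReal)) :=
        (continuous_coe_real_ereal.tendsto rb).comp hdt
      filter_upwards [hct.eventually_lt_const hb] with n hn
      exact lt_of_le_of_lt (hfd n) hn
  refine ⟨x, xs, h1, ⟨t, vn, htpos, htt, hvnt, hxn_eq⟩, hft, ?_⟩
  -- the limsup bound
  obtain ⟨φ, hφ⟩ := DDaux.exists_eps_subgradient hf hbot hconv xbar hxbar one_pos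
  obtain ⟨B, hBdef⟩ : ∃ B : ℝ, B = rb - 1 - ‖φ‖ * (1 + ‖u‖) := ⟨_, rfl⟩
  have hxn_xbar : ∀ n, ‖x n - xbar‖ ≤ 1 + ‖u‖ := by
    intro n
    have h := h2 n
    have htri : ‖x n - xbar‖ ≤ ‖x n - z n‖ + ‖z n - xbar‖ := by
      simpa using norm_sub_le_norm_sub_add_norm_sub (x n) (z n) xbar
    have hzx : ‖z n - xbar‖ = t n * ‖u‖ := by
      rw [hzdef]
      simp only [add_sub_cancel_left]
      rw [norm_smul, Real.norm_eq_abs, abs_of_pos (htpos n)]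
    have h5 : t n * ep n ≤ 1 := by
      have := hthalf n
      have := hepone n
      nlinarith [htpos n, heppos n]
    have h6 : t n * ‖u‖ ≤ ‖u‖ := by
      nlinarith [htpos n, hthalf n, norm_nonneg u]
    linarith
  have hlow : ∀ n, B ≤ (f (x n)).toReal := by
    intro n
    have h := hφ (x n)
    rw [hrb, hfx_r n, ← EReal.coe_add, ← EReal.coe_add] at h
    have hr := EReal.coe_le_coe_iff.1 h
    have habs : |φ (x n - xbar)| ≤ ‖φ‖ * ‖x n - xbar‖ := by
      rw [← Real.norm_eq_abs]; exact φ.le_opNorm _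
    have h7 : ‖φ‖ * ‖x n - xbar‖ ≤ ‖φ‖ * (1 + ‖u‖) :=
      mul_le_mul_of_nonneg_left (hxn_xbar n) (norm_nonneg φ)
    have h8 : -(‖φ‖ * (1 + ‖u‖)) ≤ φ (x n - xbar) := by
      have := abs_le.1 habs
      linarith [this.1]
    rw [hBdef]
    linarith
  obtain ⟨C, hCdef⟩ : ∃ C : ℝ, C = 2 * max (S - B + 2) 0 := ⟨_, rfl⟩
  have hC0 : 0 ≤ C := by rw [hCdef]; positivity
  have hxsu : ∀ n, xs n u ≤ C := by
    intro n
    have h := h1 n (xbar + u)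
    rw [hS, hfx_r n, ← EReal.coe_add] at h
    have hr := EReal.coe_le_coe_iff.1 h
    have hdec : xbar + u - x n = (1 - t n) • u - (x n - z n) := by
      rw [sub_smul, one_smul, hzdef]
      simp only
      abel
    have hlin : xs n (xbar + u - x n) = (1 - t n) * xs n u - xs n (x n - z n) := by
      rw [hdec, map_sub, map_smul, smul_eq_mul]
    rw [hlin] at hr
    have h4' := h4 n
    have hlo := hlow n
    have hepo := hepone n
    -- (1 - t n) * xs n u ≤ S - B + 2
    have hkey : (1 - t n) * xs n u ≤ S - B + 2 := by linarith
    rcases le_or_gt (xs n u) 0 with hneg | hpos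
    · linarith
    · have hhalf : (1/2 : ℝ) * xs n u ≤ (1 - t n) * xs n u :=
        mul_le_mul_of_nonneg_right (by linarith [hthalf n]) hpos.le
      have hmax := le_max_left (S - B + 2) 0
      rw [hCdef]
      linarith
  have hbound : ∀ n, xs n (x n - xbar) ≤ 2 * ep n + t n * C := by
    intro n
    have hsplit : x n - xbar = (x n - z n) + t n • u := by
      rw [hzdef]
      simp only
      abel
    rw [hsplit, map_add, map_smul, smul_eq_mul]
    have h4' := h4 n
    have := mul_le_mul_of_nonneg_left (hxsu n) (htpos n).le
    linarith
  set a : ℕ → ℝ := fun n => 2 * ep n + t n * C with hadef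
  have hat : Tendsto a atTop (𝓝 (0:ℝ)) := by
    have h := (hept.const_mul 2).add (htt.mul_const C)
    have he : (2:ℝ) * 0 + 0 * C = 0 := by ring
    rw [he] at h
    exact hadef ▸ h
  have hcoe : Tendsto (fun n => ((a n : ℝ) : EReal)) atTop (𝓝 ((0:ℝ) : EReal)) :=
    (continuous_coe_real_ereal.tendsto 0).comp hat
  have hls : limsup (fun n => ((a n : ℝ) : EReal)) atTop = ((0:ℝ) : EReal) :=
    hcoe.limsup_eq
  calc limsup (fun n => ((xs n (x n - xbar) : ℝ) : EReal)) atTop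
      ≤ limsup (fun n => ((a n : ℝ) : EReal)) atTop :=
        limsup_le_limsup (Filter.Eventually.of_forall fun n =>
          EReal.coe_le_coe_iff.2 (hbound n))
    _ = 0 := by rw [hls]; norm_cast

end DDauxSection

theorem directional_density_convex_subdifferential {X : Type*} [NormedAddCommGroup X]
    [NormedSpace ℝ X] [CompleteSpace X]
    (f : X → EReal) (hf : LowerSemicontinuous f) (hbot : ∀ y, f y ≠ ⊥)
    (hconv : ∀ x y : X, ∀ t : ℝ, 0 ≤ t → t ≤ 1 →
      f ((1 - t) • x + t • y) ≤ (((1 - t : ℝ)) : EReal) * f x + ((t : ℝ) : EReal) * f y)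
    (xbar : X) (hxbar : f xbar ≠ ⊤) (u : X) (hu : f (xbar + u) ≠ ⊤) :
    ∃ xn : ℕ → X, ∃ xsn : ℕ → (X →L[ℝ] ℝ),
      (∀ n, ∀ y : X, ((xsn n (y - xn n) : ℝ) : EReal) + f (xn n) ≤ f y) ∧
      (∃ t : ℕ → ℝ, ∃ vn : ℕ → X, (∀ n, 0 < t n) ∧
        Filter.Tendsto t Filter.atTop (𝓝 (0:ℝ)) ∧
        Filter.Tendsto vn Filter.atTop (𝓝 u) ∧
        ∀ n, xn n = xbar + t n • vn n) ∧
      Filter.Tendsto (fun n => f (xn n)) Filter.atTop (𝓝 (f xbar)) ∧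
      Filter.limsup (fun n => ((xsn n (xn n - xbar) : ℝ) : EReal)) Filter.atTop ≤ 0 := by
  exact directional_density_convex_subdifferential' f hf hbot hconv xbar hxbar u hu
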